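/- Let F = (X,(R_◇)_{◇∈A},𝓟) be a general frame, i.e., 𝓟 is a collection of subsets of X containing ∅, closed under union, intersection, complement, and under each operation V ↦ R_◇⁻¹[V]. Then the modal algebra (𝓟, ∪, ∩, complement, (V ↦ R_◇⁻¹[V])_{◇∈A}) is locally finite (every finitely generated subalgebra is finite) if and only if F is tunable: for every finite partition 𝓥 of X with 𝓥 ⊆ 𝓟, there exists a finite refinement of 𝓥 that is tuned in the Kripke frame (X,(R_◇)_{◇∈A}). -/

import Mathlib

set_option maxHeartbeats 1000000

/-- Modal formulas over an alphabet `A` of diamonds, with variables `pₙ`,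
falsum and implication as primitive Boolean connectives. -/
inductive MF (A : Type) : Type
  | var : ℕ → MF A
  | bot : MF A
  | imp : MF A → MF A → MF A
  | dia : A → MF A → MF A

namespace MF

variable {A : Type}

def neg (φ : MF A) : MF A := .imp φ .bot
def top : MF A := neg .bot
def or (φ ψ : MF A) : MF A := .imp (neg φ) ψ
def and (φ ψ : MF A) : MF A := neg (.imp φ (neg ψ))
def box (a : A) (φ : MF A) : MF A := neg (.dia a (neg φ))
def iff (φ ψ : MF A) : MF A := and (.imp φ ψ) (.imp ψ φ)

def bigOr : List (MF A) → MF A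
  | [] => .bot
  | φ :: r => or φ (bigOr r)

def bigAnd : List (MF A) → MF A
  | [] => top
  | φ :: r => and φ (bigAnd r)

def subst (σ : ℕ → MF A) : MF A → MF A
  | .var n => σ n
  | .bot => .bot
  | .imp φ ψ => .imp (subst σ φ) (subst σ ψ)
  | .dia a φ => .dia a (subst σ φ)

/-- `φ` is a `k`-formula: all its variables are among `p₀,…,p_{k-1}`. -/
def varsBelow (k : ℕ) : MF A → Prop
  | .var n => n < k
  | .bot => True
  | .imp φ ψ => varsBelow k φ ∧ varsBelow k ψ
  | .dia _ φ => varsBelow k φ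

/-- Modal depth: maximal number of nested modalities. -/
def depth : MF A → ℕ
  | .var _ => 0
  | .bot => 0
  | .imp φ ψ => max (depth φ) (depth ψ)
  | .dia _ φ => depth φ + 1

end MF

/-- Truth in a Kripke model `(X, R, θ)` at a point. -/
def satM {A X : Type} (R : A → X → X → Prop) (θ : ℕ → Set X) : X → MF A → Prop
  | w, MF.var n => w ∈ θ n
  | _, MF.bot => False
  | w, MF.imp φ ψ => satM R θ w φ → satM R θ w ψ
  | w, MF.dia a φ => ∃ v, R a w v ∧ satM R θ v φ

/-- Validity in a Kripke frame. -/
def validM {A X : Type} (R : A → X → X → Prop) (φ : MF A) : Prop :=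
  ∀ θ w, satM R θ w φ

/-- `φ` is a substitution instance of a classical propositional tautology
(equivalently: true under every Boolean valuation treating variables and
diamond formulas as atoms). -/
def IsTautInstance {A : Type} (φ : MF A) : Prop :=
  ∀ f : MF A → Prop, ¬ f .bot → (∀ ψ χ, f (.imp ψ χ) ↔ (f ψ → f χ)) → f φ

/-- `L` is a normal modal logic over `A`. -/
structure IsNormalLogic {A : Type} (L : Set (MF A)) : Prop where
  taut : ∀ φ : MF A, IsTautInstance φ → φ ∈ L
  dia_bot : ∀ a : A, (MF.dia a MF.bot).neg ∈ L
  dia_or : ∀ a : A,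
    MF.imp (.dia a (MF.or (.var 0) (.var 1))) (MF.or (.dia a (.var 0)) (.dia a (.var 1))) ∈ L
  mp : ∀ {φ ψ : MF A}, MF.imp φ ψ ∈ L → φ ∈ L → ψ ∈ L
  subst_mem : ∀ {φ : MF A} (σ : ℕ → MF A), φ ∈ L → φ.subst σ ∈ L
  mono : ∀ (a : A) {φ ψ : MF A}, MF.imp φ ψ ∈ L → MF.imp (.dia a φ) (.dia a ψ) ∈ L

/-- `L` is `k`-finite: there are finitely many `k`-formulas up to `L`-equivalence. -/
def kFinite {A : Type} (L : Set (MF A)) (k : ℕ) : Prop :=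
  ∃ S : Finset (MF A), ∀ φ : MF A, φ.varsBelow k → ∃ ψ ∈ S, MF.iff φ ψ ∈ L

def LocallyTabular {A : Type} (L : Set (MF A)) : Prop := ∀ k : ℕ, kFinite L k

/-- `◇_S φ`, the disjunction of `◇φ` over `◇ ∈ S`. -/
noncomputable def diaS {A : Type} (S : Finset A) (φ : MF A) : MF A :=
  MF.bigOr (S.toList.map (fun a => MF.dia a φ))

/-- `(◇_S)^n φ`. -/
noncomputable def diaSpow {A : Type} (S : Finset A) : ℕ → MF A → MF A
  | 0, φ => φ
  | n + 1, φ => diaS S (diaSpow S n φ)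

/-- `◇_S^{≤ m} φ = ⋁_{i ≤ m} (◇_S)^i φ`. -/
noncomputable def diaSle {A : Type} (S : Finset A) (m : ℕ) (φ : MF A) : MF A :=
  MF.bigOr ((List.range (m + 1)).map (fun i => diaSpow S i φ))

/-- `□* φ = ¬◇_S^{≤ m}¬φ`. -/
noncomputable def boxSle {A : Type} (S : Finset A) (m : ℕ) (φ : MF A) : MF A :=
  MF.neg (diaSle S m (MF.neg φ))

/-- The pretransitivity formula `atr_S(m) = (◇_S)^{m+1} p₀ → ◇_S^{≤m} p₀`. -/
noncomputable def atrS {A : Type} (S : Finset A) (m : ℕ) : MF A :=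
  MF.imp (diaSpow S (m + 1) (.var 0)) (diaSle S m (.var 0))

/-- The finite-height formulas `B_h^{≤m}` over the compound modality `◇_S^{≤m}`:
`B₀ = ⊥`, `B_h = p_h → □*(◇* p_h ∨ B_{h-1})`. -/
noncomputable def BstarS {A : Type} (S : Finset A) (m : ℕ) : ℕ → MF A
  | 0 => .bot
  | h + 1 => MF.imp (.var (h + 1))
      (boxSle S m (MF.or (diaSle S m (.var (h + 1))) (BstarS S m h)))

/-- Unimodal finite-height formulas: `B₀ = ⊥`, `B_h = p_h → □(◇ p_h ∨ B_{h-1})`. -/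
def BformU : ℕ → MF Unit
  | 0 => .bot
  | h + 1 => MF.imp (.var (h + 1))
      (MF.box () (MF.or (MF.dia () (.var (h + 1))) (BformU h)))

/-- `p_i ∧ ◇_S (p_{i+1} ∧ ◇_S ( … ∧ ◇_S p_{i+n}) … )`. -/
noncomputable def chainS {A : Type} (S : Finset A) : ℕ → ℕ → MF A
  | i, 0 => .var i
  | i, n + 1 => MF.and (.var i) (diaS S (chainS S (i + 1) n))

/-- The list of pairs `(i, j)` with `i < j ≤ n`. -/
def pairsLT (n : ℕ) : List (ℕ × ℕ) :=
  (List.range (n + 1)).flatMap (fun j => (List.range j).map (fun i => (i, j)))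

/-- The reducible-path formula `R_m(◇_S)`. -/
noncomputable def RmS {A : Type} (S : Finset A) (m : ℕ) : MF A :=
  MF.imp (chainS S 0 (m + 1))
    (MF.or
      (MF.bigOr ((pairsLT (m + 1)).map
        (fun p => diaSpow S p.1 (MF.and (.var p.1) (.var p.2)))))
      (MF.bigOr ((pairsLT m).map
        (fun p => diaSpow S p.1 (MF.and (.var p.1) (diaS S (.var (p.2 + 1))))))))

/-- `n`-fold relational composition: `R⁰ = Id`, `R^{n+1} = R ∘ Rⁿ`. -/
def relPow {X : Type} (R : X → X → Prop) : ℕ → X → X → Prop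
  | 0 => fun a b => a = b
  | n + 1 => fun a c => ∃ b, R a b ∧ relPow R n b c

/-- Reflexive transitive closure `R* = ⋃ₙ Rⁿ`. -/
def relStar {X : Type} (R : X → X → Prop) (a b : X) : Prop := ∃ n, relPow R n a b

/-- `R` is `m`-transitive: `R^{m+1} ⊆ R^{≤ m}`. -/
def mTransitive {X : Type} (R : X → X → Prop) (m : ℕ) : Prop :=
  ∀ a b, relPow R (m + 1) a b → ∃ i ≤ m, relPow R i a b

/-- The union `R_F = ⋃_{◇ ∈ A} R_◇`. -/
def unionRel {A X : Type} (R : A → X → X → Prop) : X → X → Prop :=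
  fun a b => ∃ i, R i a b

/-- `R⁻¹[V] = {x ∣ ∃ y ∈ V, x R y}`. -/
def diaPre {X : Type} (R : X → X → Prop) (V : Set X) : Set X := {x | ∃ y ∈ V, R x y}

/-- The height of `(X, R)` is at most `h`: there is no strictly ascending
(h+1)-chain with respect to `R*`. -/
def heightLE {X : Type} (R : X → X → Prop) (h : ℕ) : Prop :=
  ¬ ∃ x : ℕ → X, ∀ i < h, relStar R (x i) (x (i + 1)) ∧ ¬ relStar R (x (i + 1)) (x i)

/-- A partition is `R`-tuned. -/
def RTuned {X : Type} (R : X → X → Prop) (𝒰 : Set (Set X)) : Prop :=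
  ∀ U ∈ 𝒰, ∀ V ∈ 𝒰, (∃ a ∈ U, ∃ b ∈ V, R a b) → ∀ a ∈ U, ∃ b ∈ V, R a b

/-- A partition is tuned in the frame `(X, (R_◇)_{◇ ∈ A})`. -/
def TunedIn {A X : Type} (R : A → X → X → Prop) (𝒰 : Set (Set X)) : Prop :=
  ∀ a : A, RTuned (R a) 𝒰

/-- `𝒰` refines `𝒱`: every block of `𝒰` is included in a block of `𝒱`. -/
def Refines {X : Type} (𝒰 𝒱 : Set (Set X)) : Prop := ∀ U ∈ 𝒰, ∃ V ∈ 𝒱, U ⊆ V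

/-- The equivalence `≡_𝒱` induced by a family of sets. -/
def famEq {X : Type} (𝒱 : Set (Set X)) (a b : X) : Prop := ∀ V ∈ 𝒱, (a ∈ V ↔ b ∈ V)

/-- The set of equivalence classes of a relation. -/
def eqClasses {X : Type} (E : X → X → Prop) : Set (Set X) := {C | ∃ x, C = {y | E x y}}

/-- Tunedness condition for abstract normal operators `g_◇` on the powerset. -/
def gTuned {A X : Type} (g : A → Set X → Set X) (𝒰 : Set (Set X)) : Prop :=
  ∀ a : A, ∀ U ∈ 𝒰, ∀ V ∈ 𝒰, (V ∩ g a U).Nonempty → V ⊆ g a U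

/-- `C` is a subalgebra of the modal algebra `(𝒫(X), ∪, ∩, ᶜ, (g_◇))`. -/
def IsSubalg {A X : Type} (g : A → Set X → Set X) (C : Set (Set X)) : Prop :=
  ∅ ∈ C ∧ Set.univ ∈ C ∧ (∀ U ∈ C, ∀ V ∈ C, U ∪ V ∈ C) ∧
    (∀ U ∈ C, ∀ V ∈ C, U ∩ V ∈ C) ∧ (∀ U ∈ C, Uᶜ ∈ C) ∧ (∀ U ∈ C, ∀ a : A, g a U ∈ C)

/-- The subalgebra generated by `𝒬`. -/
def genAlg {A X : Type} (g : A → Set X → Set X) (𝒬 : Set (Set X)) : Set (Set X) :=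
  ⋂₀ {C | IsSubalg g C ∧ 𝒬 ⊆ C}

/-- Points of a model indistinguishable by `k`-formulas of depth at most `d`. -/
def modEq {A X : Type} (R : A → X → X → Prop) (θ : ℕ → Set X) (k d : ℕ) (a b : X) : Prop :=
  ∀ φ : MF A, φ.varsBelow k → φ.depth ≤ d → (satM R θ a φ ↔ satM R θ b φ)

/-- Points of a model indistinguishable by all `k`-formulas. -/
def modEqAll {A X : Type} (R : A → X → X → Prop) (θ : ℕ → Set X) (k : ℕ) (a b : X) : Prop :=
  ∀ φ : MF A, φ.varsBelow k → (satM R θ a φ ↔ satM R θ b φ)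

/-- The modal depth of the `k`-model `(X, R, θ)` is at most `d`. -/
def mdModelLE {A X : Type} (R : A → X → X → Prop) (θ : ℕ → Set X) (k d : ℕ) : Prop :=
  ∀ e : ℕ, modEq R θ k e ≠ modEq R θ k (e + 1) → e ≤ d

/-- Bundled Kripke frames over the alphabet `A`. -/
structure KFrame (A : Type) : Type 1 where
  W : Type
  R : A → W → W → Prop

/-- The logic of a class of Kripke frames. -/
def LogC {A : Type} (𝓕 : Set (KFrame A)) : Set (MF A) :=
  {φ | ∀ F ∈ 𝓕, validM F.R φ}

/-- `Y` is an upset of the frame: `R_◇[Y] ⊆ Y` for every `◇`. -/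
def UpsetIn {A X : Type} (R : A → X → X → Prop) (Y : Set X) : Prop :=
  ∀ a : A, ∀ y ∈ Y, ∀ z, R a y z → z ∈ Y

/-- The relations of a frame restricted to a subset. -/
def restrR {A X : Type} (R : A → X → X → Prop) (Y : Set X) : A → Y → Y → Prop :=
  fun a u v => R a u.val v.val

/-- A valuation restricted to a subset. -/
def restrV {X : Type} (θ : ℕ → Set X) (Y : Set X) : ℕ → Set Y :=
  fun n => {u | u.val ∈ θ n}

/-- The restriction `F ↾ Y` of a frame to a subset of its domain. -/
def KFrame.restrict {A : Type} (F : KFrame A) (Y : Set F.W) : KFrame A :=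
  ⟨Y, restrR F.R Y⟩

/-- The induced partitions `𝒱_d`: `𝒱₀ = X/≡_𝒱` and `𝒱_{d+1}` is the quotient by
the family `𝒱_d ∪ {R_◇⁻¹[V] : ◇ ∈ A, V ∈ 𝒱_d}`. -/
def stageClasses {A X : Type} (R : A → X → X → Prop) (𝒱 : Set (Set X)) : ℕ → Set (Set X)
  | 0 => eqClasses (famEq 𝒱)
  | d + 1 =>
      eqClasses (famEq (stageClasses R 𝒱 d ∪
        {V' | ∃ a : A, ∃ V ∈ stageClasses R 𝒱 d, V' = diaPre (R a) V}))

/-- `𝒱_ω = ⋃_d 𝒱_d`. -/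
def stageUnion {A X : Type} (R : A → X → X → Prop) (𝒱 : Set (Set X)) : Set (Set X) :=
  ⋃ d : ℕ, stageClasses R 𝒱 d

/-- `md(V) = min {d ∣ V ∈ 𝒱_d}` (as an extended natural). -/
noncomputable def mdBlock {A X : Type} (R : A → X → X → Prop) (𝒱 : Set (Set X))
    (V : Set X) : ℕ∞ :=
  ⨅ d ∈ {d : ℕ | V ∈ stageClasses R 𝒱 d}, (d : ℕ∞)

/-- `md(𝒱) = sup {md(V) ∣ V ∈ 𝒱_ω}`. -/
noncomputable def mdFam {A X : Type} (R : A → X → X → Prop) (𝒱 : Set (Set X)) : ℕ∞ :=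
  ⨆ V ∈ stageUnion R 𝒱, mdBlock R 𝒱 V

/-- The modal depth of a frame: `sup` of `md(𝒱)` over finite families `𝒱`. -/
noncomputable def mdFrame {A : Type} (F : KFrame A) : ℕ∞ :=
  ⨆ 𝒱 ∈ {𝒱 : Set (Set F.W) | 𝒱.Finite}, mdFam F.R 𝒱

/-- The modal depth of a class of frames. -/
noncomputable def mdClass {A : Type} (𝓕 : Set (KFrame A)) : ℕ∞ :=
  ⨆ F ∈ 𝓕, mdFrame F

/-- `md(L) = sup_φ min {md(ψ) ∣ φ ↔ ψ ∈ L}`. -/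
noncomputable def mdLogic {A : Type} (L : Set (MF A)) : ℕ∞ :=
  ⨆ φ : MF A, ⨅ ψ ∈ {ψ : MF A | MF.iff φ ψ ∈ L}, (ψ.depth : ℕ∞)

/-- `tra(𝓕)`: the least `m` such that every frame in `𝓕` is `m`-transitive. -/
noncomputable def traClass {A : Type} (𝓕 : Set (KFrame A)) : ℕ∞ :=
  ⨅ m ∈ {m : ℕ | ∀ F ∈ 𝓕, mTransitive (unionRel F.R) m}, (m : ℕ∞)

/-- The disjoint sum of a family of frames. -/
def disjSum {A I : Type} (F : I → KFrame A) : KFrame A where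
  W := Σ i : I, (F i).W
  R a x y := ∃ (i : I) (u v : (F i).W), x = ⟨i, u⟩ ∧ y = ⟨i, v⟩ ∧ (F i).R a u v

/-- The cluster of a point: its equivalence class under `a R* b ∧ b R* a`. -/
def clusterOf {X : Type} (R : X → X → Prop) (x : X) : Set X :=
  {y | relStar R x y ∧ relStar R y x}

/-- `clust(𝓕)`: the restrictions of frames in `𝓕` to their clusters. -/
def clustC {A : Type} (𝓕 : Set (KFrame A)) : Set (KFrame A) :=
  {G | ∃ F ∈ 𝓕, ∃ x : F.W, G = F.restrict (clusterOf (unionRel F.R) x)}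

section TuningLemmas

variable {X : Type}

lemma famEq_refl (𝒱 : Set (Set X)) (x : X) : famEq 𝒱 x x := fun _ _ => Iff.rfl

lemma famEq_symm {𝒱 : Set (Set X)} {x y : X} (h : famEq 𝒱 x y) : famEq 𝒱 y x :=
  fun V hV => (h V hV).symm

lemma famEq_trans {𝒱 : Set (Set X)} {x y z : X} (h1 : famEq 𝒱 x y)
    (h2 : famEq 𝒱 y z) : famEq 𝒱 x z := fun V hV => (h1 V hV).trans (h2 V hV)

lemma class_eq_of_famEq {𝒱 : Set (Set X)} {x y : X} (h : famEq 𝒱 x y) :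
    {z | famEq 𝒱 x z} = {z | famEq 𝒱 y z} := by
  ext z
  exact ⟨fun hz => famEq_trans (famEq_symm h) hz, fun hz => famEq_trans h hz⟩

lemma eqClasses_isPartition (𝒱 : Set (Set X)) :
    Setoid.IsPartition (eqClasses (famEq 𝒱)) := by
  constructor
  · rintro ⟨x, hx⟩
    have : x ∈ ({y | famEq 𝒱 x y} : Set X) := famEq_refl 𝒱 x
    rw [← hx] at this
    exact this
  · intro x
    refine ⟨{z | famEq 𝒱 x z}, ⟨⟨x, rfl⟩, famEq_refl 𝒱 x⟩, ?_⟩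
    rintro U ⟨⟨y, rfl⟩, hxU⟩
    exact class_eq_of_famEq hxU

lemma class_eq_sInter (𝒱 : Set (Set X)) (x : X) :
    {y | famEq 𝒱 x y} =
      ⋂₀ ({V | V ∈ 𝒱 ∧ x ∈ V} ∪ (fun V => Vᶜ) '' {V | V ∈ 𝒱 ∧ x ∉ V}) := by
  ext y
  simp only [Set.mem_sInter, Set.mem_union, Set.mem_setOf_eq, Set.mem_image]
  constructor
  · rintro h W (⟨hW, hx⟩ | ⟨V, ⟨hV, hx⟩, rfl⟩)
    · exact (h W hW).1 hx
    · exact fun hy => hx ((h V hV).2 hy)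
  · intro h V hV
    constructor
    · intro hx; exact h V (Or.inl ⟨hV, hx⟩)
    · intro hy; by_contra hx
      exact h Vᶜ (Or.inr ⟨V, ⟨hV, hx⟩, rfl⟩) hy

lemma eqClasses_finite {𝒱 : Set (Set X)} (h : 𝒱.Finite) :
    (eqClasses (famEq 𝒱)).Finite := by
  have hsub : eqClasses (famEq 𝒱) ⊆
      (fun S : Set (Set X) => ⋂₀ (S ∪ (fun V => Vᶜ) '' (𝒱 \ S))) '' {S | S ⊆ 𝒱} := by
    rintro U ⟨x, rfl⟩
    refine ⟨{V | V ∈ 𝒱 ∧ x ∈ V}, fun V hV => hV.1, ?_⟩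
    rw [class_eq_sInter]
    dsimp only
    have : 𝒱 \ {V | V ∈ 𝒱 ∧ x ∈ V} = {V | V ∈ 𝒱 ∧ x ∉ V} := by
      ext V; simp only [Set.mem_diff, Set.mem_setOf_eq]; tauto
    rw [this]
  exact ((h.finite_subsets).image _).subset hsub

lemma sInter_mem_of_subalg {A : Type} {g : A → Set X → Set X} {C : Set (Set X)}
    (hC : IsSubalg g C) {S : Set (Set X)} (hfin : S.Finite) (hS : S ⊆ C) :
    ⋂₀ S ∈ C := by
  refine Set.Finite.induction_on (motive := fun T _ => T ⊆ C → ⋂₀ T ∈ C) S hfin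
    (fun _ => by simpa using hC.2.1) ?_ hS
  intro a s _ _ ih hins
  rw [Set.sInter_insert]
  exact hC.2.2.2.1 a (hins (Set.mem_insert a s)) _
    (ih fun V hV => hins (Set.mem_insert_of_mem a hV))

lemma class_mem_of_subalg {A : Type} {g : A → Set X → Set X} {C 𝒬 : Set (Set X)}
    (hC : IsSubalg g C) (h𝒬C : 𝒬 ⊆ C) (hfin : 𝒬.Finite) (x : X) :
    {y | famEq 𝒬 x y} ∈ C := by
  rw [class_eq_sInter]
  refine sInter_mem_of_subalg hC ?_ ?_
  · refine Set.Finite.union (hfin.subset fun V hV => hV.1)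
      ((hfin.subset fun V hV => hV.1).image _)
  · rintro W (⟨hW, -⟩ | ⟨V, ⟨hV, -⟩, rfl⟩)
    · exact h𝒬C hW
    · exact hC.2.2.2.2.1 V (h𝒬C hV)

lemma isSubalg_genAlg {A : Type} (g : A → Set X → Set X) (𝒬 : Set (Set X)) :
    IsSubalg g (genAlg g 𝒬) := by
  refine ⟨?_, ?_, ?_, ?_, ?_, ?_⟩
  · exact Set.mem_sInter.2 fun C hC => hC.1.1
  · exact Set.mem_sInter.2 fun C hC => hC.1.2.1
  · intro U hU V hV
    exact Set.mem_sInter.2 fun C hC =>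
      hC.1.2.2.1 U (Set.mem_sInter.1 hU C hC) V (Set.mem_sInter.1 hV C hC)
  · intro U hU V hV
    exact Set.mem_sInter.2 fun C hC =>
      hC.1.2.2.2.1 U (Set.mem_sInter.1 hU C hC) V (Set.mem_sInter.1 hV C hC)
  · intro U hU
    exact Set.mem_sInter.2 fun C hC => hC.1.2.2.2.2.1 U (Set.mem_sInter.1 hU C hC)
  · intro U hU a
    exact Set.mem_sInter.2 fun C hC => hC.1.2.2.2.2.2 U (Set.mem_sInter.1 hU C hC) a

lemma subset_genAlg {A : Type} (g : A → Set X → Set X) (𝒬 : Set (Set X)) :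
    𝒬 ⊆ genAlg g 𝒬 := fun Q hQ => Set.mem_sInter.2 fun _ hC => hC.2 hQ

lemma genAlg_subset {A : Type} {g : A → Set X → Set X} {C 𝒬 : Set (Set X)}
    (hC : IsSubalg g C) (h𝒬 : 𝒬 ⊆ C) : genAlg g 𝒬 ⊆ C :=
  Set.sInter_subset_of_mem ⟨hC, h𝒬⟩

end TuningLemmas

/-- For a general frame `(X, (R_◇)_{◇∈A}, 𝓟)`, the modal algebra on `𝓟`
is locally finite iff the general frame is tunable. -/
theorem stmt2 {A X : Type} [Fintype A] (R : A → X → X → Prop) (𝓟 : Set (Set X))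
    (hempty : ∅ ∈ 𝓟)
    (hunion : ∀ U ∈ 𝓟, ∀ V ∈ 𝓟, U ∪ V ∈ 𝓟)
    (hinter : ∀ U ∈ 𝓟, ∀ V ∈ 𝓟, U ∩ V ∈ 𝓟)
    (hcompl : ∀ U ∈ 𝓟, Uᶜ ∈ 𝓟)
    (hdia : ∀ U ∈ 𝓟, ∀ a : A, diaPre (R a) U ∈ 𝓟) :
    (∀ 𝒬 : Set (Set X), 𝒬.Finite → 𝒬 ⊆ 𝓟 →
        (genAlg (fun a => diaPre (R a)) 𝒬).Finite)
      ↔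
    (∀ 𝒱 : Set (Set X), Setoid.IsPartition 𝒱 → 𝒱.Finite → 𝒱 ⊆ 𝓟 →
        ∃ 𝒰 : Set (Set X), Setoid.IsPartition 𝒰 ∧ 𝒰.Finite ∧
          Refines 𝒰 𝒱 ∧ TunedIn R 𝒰) := by
  constructor
  · -- local finiteness → tunable
    intro hlf 𝒱 hpart hfin hsub
    have hCfin : (genAlg (fun a => diaPre (R a)) 𝒱).Finite := hlf 𝒱 hfin hsub
    set C := genAlg (fun a => diaPre (R a)) 𝒱 with hCdef
    have hCalg : IsSubalg (fun a => diaPre (R a)) C := isSubalg_genAlg _ 𝒱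
    have h𝒱C : 𝒱 ⊆ C := subset_genAlg _ 𝒱
    refine ⟨eqClasses (famEq C), eqClasses_isPartition C, eqClasses_finite hCfin,
      ?_, ?_⟩
    · rintro U ⟨x, rfl⟩
      obtain ⟨V, ⟨hV𝒱, hxV⟩, -⟩ := hpart.2 x
      exact ⟨V, hV𝒱, fun y hy => (hy V (h𝒱C hV𝒱)).1 hxV⟩
    · rintro a U hU V hV ⟨x0, hx0, y0, hy0, hR⟩ x hx
      obtain ⟨v, rfl⟩ := hV
      obtain ⟨u, rfl⟩ := hU
      have hVmem : {y | famEq C v y} ∈ C :=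
        class_mem_of_subalg hCalg (fun W hW => hW) hCfin v
      have hdiaC : diaPre (R a) {y | famEq C v y} ∈ C := hCalg.2.2.2.2.2 _ hVmem a
      have h1 : x0 ∈ diaPre (R a) {y | famEq C v y} := ⟨y0, hy0, hR⟩
      have h2 : famEq C x0 x := famEq_trans (famEq_symm hx0) hx
      exact (h2 _ hdiaC).1 h1
  · -- tunable → local finiteness
    intro htun 𝒬 h𝒬fin h𝒬𝓟
    have h𝓟alg : IsSubalg (fun a => diaPre (R a)) 𝓟 :=
      ⟨hempty, by simpa using hcompl ∅ hempty, hunion, hinter, hcompl,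
        fun U hU a => hdia U hU a⟩
    have h𝒱𝓟 : eqClasses (famEq 𝒬) ⊆ 𝓟 := by
      rintro V ⟨x, rfl⟩
      exact class_mem_of_subalg h𝓟alg h𝒬𝓟 h𝒬fin x
    obtain ⟨𝒰, hUpart, hUfin, hUref, hUtun⟩ :=
      htun (eqClasses (famEq 𝒬)) (eqClasses_isPartition 𝒬)
        (eqClasses_finite h𝒬fin) h𝒱𝓟
    set C := {T : Set X | ∀ U ∈ 𝒰, (U ∩ T).Nonempty → U ⊆ T} with hCdef
    have hCalg : IsSubalg (fun a => diaPre (R a)) C := by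
      refine ⟨?_, ?_, ?_, ?_, ?_, ?_⟩
      · rintro U - ⟨x, -, hx⟩; exact absurd hx (Set.notMem_empty x)
      · intro U _ _; exact Set.subset_univ U
      · rintro T hT T' hT' U hU ⟨x, hxU, hxT⟩
        rcases hxT with hxT | hxT
        · exact (hT U hU ⟨x, hxU, hxT⟩).trans Set.subset_union_left
        · exact (hT' U hU ⟨x, hxU, hxT⟩).trans Set.subset_union_right
      · rintro T hT T' hT' U hU ⟨x, hxU, hxT, hxT'⟩
        exact Set.subset_inter (hT U hU ⟨x, hxU, hxT⟩) (hT' U hU ⟨x, hxU, hxT'⟩)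
      · rintro T hT U hU ⟨x, hxU, hxT⟩ z hzU hzT
        exact hxT (hT U hU ⟨z, hzU, hzT⟩ hxU)
      · rintro T hT a U hU ⟨x, hxU, y, hyT, hRxy⟩ z hzU
        obtain ⟨V, ⟨hV𝒰, hyV⟩, -⟩ := hUpart.2 y
        have hVT : V ⊆ T := hT V hV𝒰 ⟨y, hyV, hyT⟩
        obtain ⟨b, hbV, hRb⟩ :=
          hUtun a U hU V hV𝒰 ⟨x, hxU, y, hyV, hRxy⟩ z hzU
        exact ⟨b, hVT hbV, hRb⟩
    have h𝒬C : 𝒬 ⊆ C := by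
      rintro Q hQ U hU𝒰 ⟨x, hxU, hxQ⟩ u huU
      obtain ⟨V, hV𝒱, hUV⟩ := hUref U hU𝒰
      obtain ⟨z, rfl⟩ := hV𝒱
      have hzx : famEq 𝒬 z x := hUV hxU
      have hzu : famEq 𝒬 z u := hUV huU
      exact ((famEq_trans (famEq_symm hzx) hzu) Q hQ).1 hxQ
    have hCfin : C.Finite := by
      have hsub : C ⊆ Set.sUnion '' {S | S ⊆ 𝒰} := by
        intro T hT
        refine ⟨{U | U ∈ 𝒰 ∧ U ⊆ T}, fun U hU => hU.1, ?_⟩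
        ext x
        constructor
        · rintro ⟨U, ⟨-, hUT⟩, hxU⟩; exact hUT hxU
        · intro hxT
          obtain ⟨U, ⟨hU𝒰, hxU⟩, -⟩ := hUpart.2 x
          exact ⟨U, ⟨hU𝒰, hT U hU𝒰 ⟨x, hxU, hxT⟩⟩, hxU⟩
      exact ((hUfin.finite_subsets).image _).subset hsub
    exact hCfin.subset (genAlg_subset hCalg h𝒬C)
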